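/- Let t be a real number with 1/2 < t < √2/2, set α = 2·arccos(t) and a = log((1+t)/(1−t)), and let c₁, c₂ ≥ 0 be the real numbers satisfying cos²α = (cosh²(c₁)·sin²α − 1)·(cosh²(a/2)·sin²α − 1) and cos²(α/2) = (cosh²(c₂)·sin²(α/2) − 1)·(cosh²(a/2)·sin²α − 1). Then 2a + 2(c₁ + c₂) = 2·log((√(5t²−1)+2t²)/((2t−1)(1−t))). -/

import Mathlib

open Real

set_option maxHeartbeats 1000000

theorem length_on_axis (t : ℝ) (h0 : 1 / 2 < t) (h1 : t < Real.sqrt 2 / 2)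
    (c₁ c₂ : ℝ) (hc₁ : 0 ≤ c₁) (hc₂ : 0 ≤ c₂)
    (heq₁ : cos (2 * arccos t) ^ 2 =
        (Real.cosh c₁ ^ 2 * sin (2 * arccos t) ^ 2 - 1) *
          (Real.cosh (log ((1 + t) / (1 - t)) / 2) ^ 2 * sin (2 * arccos t) ^ 2 - 1))
    (heq₂ : cos (2 * arccos t / 2) ^ 2 =
        (Real.cosh c₂ ^ 2 * sin (2 * arccos t / 2) ^ 2 - 1) *
          (Real.cosh (log ((1 + t) / (1 - t)) / 2) ^ 2 * sin (2 * arccos t) ^ 2 - 1)) :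
    2 * log ((1 + t) / (1 - t)) + 2 * (c₁ + c₂) =
      2 * log ((Real.sqrt (5 * t ^ 2 - 1) + 2 * t ^ 2) / ((2 * t - 1) * (1 - t))) := by
  have ht0 : 0 < t := by linarith
  have ht2 : 2 * t ^ 2 < 1 := by
    nlinarith [Real.sq_sqrt (show (0:ℝ) ≤ 2 by norm_num), Real.sqrt_nonneg 2]
  have ht1 : t < 1 := by nlinarith
  have h1t : 0 < 1 - t := by linarith
  have h1t2 : 0 < 1 - t ^ 2 := by nlinarith
  have h2t1 : 0 < 2 * t - 1 := by linarith
  have h4t : 0 < 4 * t ^ 2 - 1 := by nlinarith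
  have h5t : 0 < 5 * t ^ 2 - 1 := by nlinarith
  have hD : 0 < (1 - t ^ 2) * (4 * t ^ 2 - 1) := mul_pos h1t2 h4t
  -- trig values
  have hca : cos (arccos t) = t := Real.cos_arccos (by linarith) (by linarith)
  have hsasq : sin (arccos t) ^ 2 = 1 - t ^ 2 := by
    rw [Real.sin_arccos]; exact Real.sq_sqrt h1t2.le
  have hcos2 : cos (2 * arccos t) = 2 * t ^ 2 - 1 := by
    rw [Real.cos_two_mul, hca]
  have hsin2sq : sin (2 * arccos t) ^ 2 = 4 * t ^ 2 * (1 - t ^ 2) := by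
    rw [Real.sin_two_mul, hca]
    linear_combination (4 * t ^ 2) * hsasq
  -- cosh(a/2)^2 = 1/(1-t^2)
  set a := Real.log ((1 + t) / (1 - t)) with ha
  have hr : (0:ℝ) < (1 + t) / (1 - t) := by positivity
  have hexpa : Real.exp a = (1 + t) / (1 - t) := Real.exp_log hr
  have hcosha : Real.cosh a = (1 + t ^ 2) / (1 - t ^ 2) := by
    rw [Real.cosh_eq, hexpa, Real.exp_neg, hexpa]
    field_simp
    ring
  have harg2 : 2 * (a / 2) = a := by ring
  have hch2 : Real.cosh a = 2 * Real.cosh (a / 2) ^ 2 - 1 := by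
    rw [← harg2, Real.cosh_two_mul, Real.sinh_sq]
    ring_nf
  rw [hcosha] at hch2
  have hcoshhalf : Real.cosh (a / 2) ^ 2 = 1 / (1 - t ^ 2) := by
    have hX : Real.cosh (a / 2) ^ 2 = ((1 + t ^ 2) / (1 - t ^ 2) + 1) / 2 := by linarith
    rw [hX, eq_div_iff h1t2.ne']
    field_simp
    ring
  have hK : Real.cosh (a / 2) ^ 2 * sin (2 * arccos t) ^ 2 - 1 = 4 * t ^ 2 - 1 := by
    rw [hcoshhalf, hsin2sq]
    field_simp
  rw [hcos2, hK, hsin2sq] at heq₁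
  have harg : 2 * arccos t / 2 = arccos t := by ring
  rw [harg] at heq₂
  rw [hca, hsasq, hK] at heq₂
  -- solve for cosh^2
  have hX1 : Real.cosh c₁ ^ 2 * ((1 - t ^ 2) * (4 * t ^ 2 - 1)) = t ^ 2 := by
    have h4 : 4 * t ^ 2 * (Real.cosh c₁ ^ 2 * ((1 - t ^ 2) * (4 * t ^ 2 - 1)) - t ^ 2) = 0 := by
      linear_combination -heq₁
    rcases mul_eq_zero.mp h4 with h | h
    · nlinarith
    · linarith
  have hX2 : Real.cosh c₂ ^ 2 * ((1 - t ^ 2) * (4 * t ^ 2 - 1)) = 5 * t ^ 2 - 1 := by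
    linear_combination -heq₂
  -- square roots
  set s := Real.sqrt ((1 - t ^ 2) * (4 * t ^ 2 - 1)) with hs
  have hs2 : s ^ 2 = (1 - t ^ 2) * (4 * t ^ 2 - 1) := Real.sq_sqrt hD.le
  have hs0 : 0 < s := Real.sqrt_pos.mpr hD
  set q := Real.sqrt (5 * t ^ 2 - 1) with hq
  have hq2 : q ^ 2 = 5 * t ^ 2 - 1 := Real.sq_sqrt h5t.le
  have hq0 : 0 < q := Real.sqrt_pos.mpr h5t
  -- exp c₁
  have hcosh1 : Real.cosh c₁ = t / s := by
    have hA : Real.cosh c₁ ^ 2 = (t / s) ^ 2 := by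
      rw [div_pow, hs2, eq_div_iff hD.ne']; exact hX1
    calc Real.cosh c₁ = Real.sqrt (Real.cosh c₁ ^ 2) :=
          (Real.sqrt_sq (Real.cosh_pos c₁).le).symm
      _ = Real.sqrt ((t / s) ^ 2) := by rw [hA]
      _ = t / s := Real.sqrt_sq (by positivity)
  have hsinh1 : Real.sinh c₁ = (1 - 2 * t ^ 2) / s := by
    have hA : Real.sinh c₁ ^ 2 = ((1 - 2 * t ^ 2) / s) ^ 2 := by
      rw [Real.sinh_sq, div_pow, hs2, eq_div_iff hD.ne']
      linear_combination hX1
    calc Real.sinh c₁ = Real.sqrt (Real.sinh c₁ ^ 2) :=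
          (Real.sqrt_sq (Real.sinh_nonneg_iff.mpr hc₁)).symm
      _ = Real.sqrt (((1 - 2 * t ^ 2) / s) ^ 2) := by rw [hA]
      _ = (1 - 2 * t ^ 2) / s := Real.sqrt_sq (div_nonneg (by linarith) hs0.le)
  have hexp1 : Real.exp c₁ = (t + (1 - 2 * t ^ 2)) / s := by
    rw [← Real.cosh_add_sinh, hcosh1, hsinh1]
    field_simp
  -- exp c₂
  have hcosh2 : Real.cosh c₂ = q / s := by
    have hA : Real.cosh c₂ ^ 2 = (q / s) ^ 2 := by
      rw [div_pow, hs2, hq2, eq_div_iff hD.ne']; exact hX2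
    calc Real.cosh c₂ = Real.sqrt (Real.cosh c₂ ^ 2) :=
          (Real.sqrt_sq (Real.cosh_pos c₂).le).symm
      _ = Real.sqrt ((q / s) ^ 2) := by rw [hA]
      _ = q / s := Real.sqrt_sq (by positivity)
  have hsinh2 : Real.sinh c₂ = 2 * t ^ 2 / s := by
    have hA : Real.sinh c₂ ^ 2 = (2 * t ^ 2 / s) ^ 2 := by
      rw [Real.sinh_sq, div_pow, hs2, eq_div_iff hD.ne']
      linear_combination hX2
    calc Real.sinh c₂ = Real.sqrt (Real.sinh c₂ ^ 2) :=
          (Real.sqrt_sq (Real.sinh_nonneg_iff.mpr hc₂)).symm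
      _ = Real.sqrt ((2 * t ^ 2 / s) ^ 2) := by rw [hA]
      _ = 2 * t ^ 2 / s := Real.sqrt_sq (by positivity)
  have hexp2 : Real.exp c₂ = (q + 2 * t ^ 2) / s := by
    rw [← Real.cosh_add_sinh, hcosh2, hsinh2]
    field_simp
  -- conclude
  have hRpos : (0:ℝ) < (q + 2 * t ^ 2) / ((2 * t - 1) * (1 - t)) := by
    apply div_pos (by positivity) (mul_pos h2t1 h1t)
  have key : a + (c₁ + c₂) = Real.log ((q + 2 * t ^ 2) / ((2 * t - 1) * (1 - t))) := by
    rw [← Real.log_exp (a + (c₁ + c₂))]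
    congr 1
    rw [Real.exp_add, Real.exp_add, hexpa, hexp1, hexp2]
    have hsne : s ≠ 0 := hs0.ne'
    rw [div_mul_div_comm, div_mul_div_comm, div_eq_div_iff (mul_ne_zero h1t.ne' (mul_ne_zero hsne hsne)) (mul_pos h2t1 h1t).ne']
    linear_combination (-(q + 2 * t ^ 2) * (1 - t)) * hs2
  linarith [key]
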